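/- Let A be a finite alphabet and let Γ be a pre-automatic structure over A with data (L, L₌, (Lₐ)ₐ∈A). If σ : A⁺ → S and τ : A⁺ → T are interpretations of Γ with respect to semigroups S and T respectively, then S and T are isomorphic; more precisely, there exists a semigroup isomorphism ρ : S → T such that ρ(σ(w)) = τ(w) for every w ∈ L. -/
import Mathlib


universe u v

/-- A pre-automatic structure over an alphabet `A`: a language `L` of nonempty words
(elements of the free semigroup `A⁺`), a relation `L₌ ⊆ L × L`, and for each letter
`a ∈ A` a relation `Lₐ ⊆ L × L`. -/
structure PreAutomaticStructure (A : Type u) where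
  L : Set (FreeSemigroup A)
  Leq : Set (FreeSemigroup A × FreeSemigroup A)
  Lletter : A → Set (FreeSemigroup A × FreeSemigroup A)
  Leq_sub : Leq ⊆ L ×ˢ L
  Lletter_sub : ∀ a, Lletter a ⊆ L ×ˢ L

/-- An interpretation of a pre-automatic structure with respect to a semigroup `S`:
a semigroup homomorphism `σ : A⁺ → S` such that (i) `σ(L) = S`, (ii) `L₌` captures
equality of representatives, (iii) `Lₐ` captures right multiplication by `a`. -/
structure IsInterpretation {A : Type u} {S : Type v} [Semigroup S]
    (Γ : PreAutomaticStructure A) (σ : FreeSemigroup A →ₙ* S) : Prop where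
  surj : ⇑σ '' Γ.L = Set.univ
  eq_iff : ∀ u ∈ Γ.L, ∀ v ∈ Γ.L, ((u, v) ∈ Γ.Leq ↔ σ u = σ v)
  step_iff : ∀ (a : A), ∀ u ∈ Γ.L, ∀ v ∈ Γ.L,
    ((u, v) ∈ Γ.Lletter a ↔ σ (u * FreeSemigroup.of a) = σ v)

/-- `σ` is consistent with the assignment of generators `ι : A → L`. -/
def ConsistentWith {A : Type u} {S : Type v} [Semigroup S] (Γ : PreAutomaticStructure A)
    (σ : FreeSemigroup A →ₙ* S) (ι : A → FreeSemigroup A) : Prop :=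
  (∀ a, ι a ∈ Γ.L) ∧ ∀ a, σ (ι a) = σ (FreeSemigroup.of a)

/-- `ι : A → L` is an assignment of generators: some interpretation is consistent with it. -/
def IsAssignment {A : Type u} (Γ : PreAutomaticStructure A)
    (ι : A → FreeSemigroup A) : Prop :=
  ∃ (T : Type v) (inst : Semigroup T)
    (τ : @MulHom (FreeSemigroup A) T _ inst.toMul),
    @IsInterpretation A T inst Γ τ ∧ @ConsistentWith A T inst Γ τ ι

/-- Composition of relations: `(u, v) ∈ R ∘ R'` iff `∃ x, (u, x) ∈ R ∧ (x, v) ∈ R'`. -/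
def relComp {W : Type*} (R R' : Set (W × W)) : Set (W × W) :=
  {p | ∃ x, (p.1, x) ∈ R ∧ (x, p.2) ∈ R'}

/-- The inverse of a relation. -/
def relInv {W : Type*} (R : Set (W × W)) : Set (W × W) := {p | (p.2, p.1) ∈ R}

/-- `L_w` for a word `w` given as a list of letters: `L_ε = L₌` and
`L_{a₁⋯aₙ} = L_{a₁} ∘ ⋯ ∘ L_{aₙ}`. -/
def PreAutomaticStructure.LwordList {A : Type u} (Γ : PreAutomaticStructure A) :
    List A → Set (FreeSemigroup A × FreeSemigroup A)
  | [] => Γ.Leq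
  | [a] => Γ.Lletter a
  | a :: b :: rest => relComp (Γ.Lletter a) (Γ.LwordList (b :: rest))

/-- `L_w` for a nonempty word `w ∈ A⁺`. -/
def PreAutomaticStructure.Lword {A : Type u} (Γ : PreAutomaticStructure A)
    (w : FreeSemigroup A) : Set (FreeSemigroup A × FreeSemigroup A) :=
  Γ.LwordList (w.head :: w.tail)



open FreeSemigroup

/-- Product of a nonempty word. -/
def wp {A : Type*} : A → List A → FreeSemigroup A
  | a, [] => FreeSemigroup.of a
  | a, b :: rest => FreeSemigroup.of a * wp b rest

lemma wp_eq {A : Type*} : ∀ (t : List A) (h : A), wp h t = ⟨h, t⟩ := by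
  intro t
  induction t with
  | nil => intro h; rfl
  | cons b rest ih =>
    intro h
    show FreeSemigroup.of h * wp b rest = _
    rw [ih b]
    rfl

lemma exists_rep {A S : Type*} [Semigroup S] {Γ : PreAutomaticStructure A}
    {σ : FreeSemigroup A →ₙ* S} (hσ : IsInterpretation Γ σ) (s : S) :
    ∃ x ∈ Γ.L, σ x = s := by
  have : s ∈ ⇑σ '' Γ.L := hσ.surj ▸ Set.mem_univ s
  obtain ⟨x, hx, hxs⟩ := this
  exact ⟨x, hx, hxs⟩

lemma lword_iff {A S : Type*} [Semigroup S] {Γ : PreAutomaticStructure A}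
    {σ : FreeSemigroup A →ₙ* S} (hσ : IsInterpretation Γ σ) :
    ∀ (rest : List A) (a : A), ∀ u ∈ Γ.L, ∀ w ∈ Γ.L,
      ((u, w) ∈ Γ.LwordList (a :: rest) ↔ σ (u * wp a rest) = σ w) := by
  intro rest
  induction rest with
  | nil => intro a u hu w hw; exact hσ.step_iff a u hu w hw
  | cons b rest ih =>
    intro a u hu w hw
    have hassoc : u * wp a (b :: rest) = (u * FreeSemigroup.of a) * wp b rest := by
      show u * (FreeSemigroup.of a * wp b rest) = _
      rw [mul_assoc]
    constructor
    · rintro ⟨x, hx1, hx2⟩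
      have hxL : x ∈ Γ.L := (Γ.Lletter_sub a hx1).2
      have h1 := (hσ.step_iff a u hu x hxL).mp hx1
      have h2 := (ih b x hxL w hw).mp hx2
      rw [hassoc, map_mul, h1, ← map_mul, h2]
    · intro h
      obtain ⟨x, hxL, hxs⟩ := exists_rep hσ (σ (u * FreeSemigroup.of a))
      refine ⟨x, (hσ.step_iff a u hu x hxL).mpr hxs.symm, (ih b x hxL w hw).mpr ?_⟩
      rw [map_mul, hxs, ← map_mul, ← hassoc, h]

/-- Transfer lemma: the key fact. -/
lemma transfer_mul {A S T : Type*} [Semigroup S] [Semigroup T] {Γ : PreAutomaticStructure A}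
    {σ : FreeSemigroup A →ₙ* S} {τ : FreeSemigroup A →ₙ* T}
    (hσ : IsInterpretation Γ σ) (hτ : IsInterpretation Γ τ)
    {u w : FreeSemigroup A} (hu : u ∈ Γ.L) (hw : w ∈ Γ.L) (v : FreeSemigroup A)
    (h : σ (u * v) = σ w) : τ (u * v) = τ w := by
  obtain ⟨a, t⟩ := v
  have hv : wp a t = (⟨a, t⟩ : FreeSemigroup A) := wp_eq t a
  rw [← hv] at h ⊢
  exact (lword_iff hτ t a u hu w hw).mp ((lword_iff hσ t a u hu w hw).mpr h)

lemma transfer_eq {A S T : Type*} [Semigroup S] [Semigroup T] {Γ : PreAutomaticStructure A}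
    {σ : FreeSemigroup A →ₙ* S} {τ : FreeSemigroup A →ₙ* T}
    (hσ : IsInterpretation Γ σ) (hτ : IsInterpretation Γ τ)
    {u w : FreeSemigroup A} (hu : u ∈ Γ.L) (hw : w ∈ Γ.L)
    (h : σ u = σ w) : τ u = τ w :=
  (hτ.eq_iff u hu w hw).mp ((hσ.eq_iff u hu w hw).mpr h)

theorem stmt_0x {A : Type*} [Finite A] {S T : Type*} [Semigroup S] [Semigroup T]
    (Γ : PreAutomaticStructure A)
    (σ : FreeSemigroup A →ₙ* S) (τ : FreeSemigroup A →ₙ* T)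
    (hσ : IsInterpretation Γ σ) (hτ : IsInterpretation Γ τ) :
    ∃ ρ : S ≃* T, ∀ w ∈ Γ.L, ρ (σ w) = τ w := by
  classical
  choose repS hrepSL hrepS using exists_rep hσ
  choose repT hrepTL hrepT using exists_rep hτ
  -- f and g
  set f : S → T := fun s => τ (repS s) with hf
  set g : T → S := fun t => σ (repT t) with hg
  have keyf : ∀ u ∈ Γ.L, f (σ u) = τ u := fun u hu =>
    transfer_eq hσ hτ (hrepSL (σ u)) hu (hrepS (σ u))
  have keyg : ∀ u ∈ Γ.L, g (τ u) = σ u := fun u hu =>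
    transfer_eq hτ hσ (hrepTL (τ u)) hu (hrepT (τ u))
  have hmul : ∀ s₁ s₂ : S, f (s₁ * s₂) = f s₁ * f s₂ := by
    intro s₁ s₂
    have h : σ (repS s₁ * repS s₂) = σ (repS (s₁ * s₂)) := by
      rw [map_mul, hrepS, hrepS, hrepS]
    have h2 : τ (repS s₁ * repS s₂) = τ (repS (s₁ * s₂)) :=
      transfer_mul hσ hτ (hrepSL s₁) (hrepSL (s₁ * s₂)) (repS s₂) h
    show τ (repS (s₁ * s₂)) = τ (repS s₁) * τ (repS s₂)
    rw [← h2, map_mul]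
  refine ⟨⟨⟨f, g, ?_, ?_⟩, fun s₁ s₂ => hmul s₁ s₂⟩, fun w hw => keyf w hw⟩
  · intro s
    have := keyg (repS s) (hrepSL s)
    simp only [hf, hg] at *
    rw [this, hrepS]
  · intro t
    have := keyf (repT t) (hrepTL t)
    simp only [hf, hg] at *
    rw [this, hrepT]

/-- Two semigroups described by the same pre-automatic structure are isomorphic,
via an isomorphism compatible with the two interpretations on `L`. -/
theorem stmt_0 {A : Type*} [Finite A] {S T : Type*} [Semigroup S] [Semigroup T]
    (Γ : PreAutomaticStructure A)
    (σ : FreeSemigroup A →ₙ* S) (τ : FreeSemigroup A →ₙ* T)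
    (hσ : IsInterpretation Γ σ) (hτ : IsInterpretation Γ τ) :
    ∃ ρ : S ≃* T, ∀ w ∈ Γ.L, ρ (σ w) = τ w := by
  exact stmt_0x Γ σ τ hσ hτ
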